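/- Every countable group embeds in a 2-generated group; that is, for every countable group G there exists a group H generated by two of its elements and an injective group homomorphism from G into H. -/

import Mathlib

open SemidirectProduct Multiplicative
open scoped commutatorElement

namespace TwoGenAux

/-- Uniqueness of sums of two powers of two. -/
lemma two_pow_add_two_pow : ∀ a b c d : ℕ, 2 ^ a + 2 ^ b = 2 ^ c + 2 ^ d →
    (a = c ∧ b = d) ∨ (a = d ∧ b = c) := by
  have hpinj : ∀ x y : ℕ, (2:ℕ) ^ x = 2 ^ y → x = y :=
    fun x y h => Nat.pow_right_injective (by norm_num) h
  have hple : ∀ x : ℕ, (1:ℕ) ≤ 2 ^ x := fun x => Nat.one_le_two_pow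
  intro a
  induction a with
  | zero =>
    intro b c d h
    cases b with
    | zero =>
      have h1 := hple c
      have h2 := hple d
      have hc2 : 2 ^ c = 1 := by simp only [pow_zero] at h; omega
      have hd2 : 2 ^ d = 1 := by simp only [pow_zero] at h; omega
      exact Or.inl ⟨(hpinj _ _ (by simpa using hc2)).symm, (hpinj _ _ (by simpa using hd2)).symm⟩
    | succ b' =>
      cases c with
      | zero =>
        cases d with
        | zero =>
          have := hple b'
          simp only [pow_succ, pow_zero] at h
          omega
        | succ d' =>
          left
          refine ⟨rfl, hpinj _ _ ?_⟩
          simp only [pow_zero] at h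
          omega
      | succ c' =>
        cases d with
        | zero =>
          right
          refine ⟨rfl, hpinj _ _ ?_⟩
          simp only [pow_zero] at h
          omega
        | succ d' =>
          simp only [pow_succ, pow_zero] at h
          omega
  | succ a' ih =>
    intro b c d h
    cases b with
    | zero =>
      cases c with
      | zero =>
        cases d with
        | zero =>
          have := hple a'
          simp only [pow_succ, pow_zero] at h
          omega
        | succ d' =>
          right
          refine ⟨hpinj _ _ ?_, rfl⟩
          simp only [pow_zero] at h
          omega
      | succ c' =>
        cases d with
        | zero =>
          left
          refine ⟨hpinj _ _ ?_, rfl⟩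
          simp only [pow_zero] at h
          omega
        | succ d' =>
          simp only [pow_succ, pow_zero] at h
          omega
    | succ b' =>
      cases c with
      | zero =>
        cases d with
        | zero =>
          have h1 := hple a'
          have h2 := hple b'
          simp only [pow_succ, pow_zero] at h
          omega
        | succ d' =>
          simp only [pow_succ, pow_zero] at h
          omega
      | succ c' =>
        cases d with
        | zero =>
          simp only [pow_succ, pow_zero] at h
          omega
        | succ d' =>
          have h' : 2 ^ a' + 2 ^ b' = 2 ^ c' + 2 ^ d' := by
            simp only [pow_succ] at h
            omega
          rcases ih b' c' d' h' with ⟨h1, h2⟩ | ⟨h1, h2⟩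
          · left; omega
          · right; omega

/-- The Sidon property of powers of two, integer version. -/
lemma sidon {i j p q : ℕ} (hij : i ≠ j) (h : (2:ℤ) ^ q - 2 ^ p = 2 ^ j - 2 ^ i) :
    q = j ∧ p = i := by
  have h' : (2:ℤ) ^ q + 2 ^ i = 2 ^ j + 2 ^ p := by linarith
  have hn : (2:ℕ) ^ q + 2 ^ i = 2 ^ j + 2 ^ p := by exact_mod_cast h'
  rcases two_pow_add_two_pow q i j p hn with ⟨h1, h2⟩ | ⟨h1, h2⟩
  · exact ⟨h1, h2.symm⟩
  · exact absurd h2 hij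

variable (Γ : Type) [Group Γ]

/-- The shift automorphism of `ℤ → Γ`. -/
def shiftAut (k : ℤ) : MulAut (ℤ → Γ) where
  toFun x := fun n => x (n + k)
  invFun x := fun n => x (n - k)
  left_inv x := funext fun n => by simp
  right_inv x := funext fun n => by simp
  map_mul' x y := rfl

/-- The shift action of `ℤ` on `ℤ → Γ`. -/
def shift : Multiplicative ℤ →* MulAut (ℤ → Γ) where
  toFun k := shiftAut Γ (toAdd k)
  map_one' := by
    ext x n
    simp [shiftAut]
  map_mul' k l := by
    ext x n
    simp [shiftAut, add_assoc]

/-- The unrestricted wreath product of `Γ` with `ℤ`. -/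
abbrev W : Type := (ℤ → Γ) ⋊[shift Γ] Multiplicative ℤ

/-- The generator of the `ℤ` factor. -/
def t : W Γ := inr (ofAdd 1)

variable {Γ}

lemma shift_apply (k : ℤ) (x : ℤ → Γ) :
    (shift Γ (ofAdd k) x) = fun n => x (n + k) := rfl

lemma conj_inl (k : ℤ) (x : ℤ → Γ) :
    (inr (ofAdd k) : W Γ) * inl x * (inr (ofAdd k))⁻¹ = inl (fun n => x (n + k)) := by
  have h := inl_aut (φ := shift Γ) (ofAdd k) x
  rw [map_inv, shift_apply] at h
  exact h.symm

variable (Γ) in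
/-- The canonical embedding `Γ →* W Γ` at coordinate `0`. -/
def ψ : Γ →* W Γ :=
  (inl : (ℤ → Γ) →* W Γ).comp (MonoidHom.mulSingle (fun _ : ℤ => Γ) 0)

lemma ψ_injective : Function.Injective (ψ Γ) := by
  intro x y h
  simp only [ψ, MonoidHom.comp_apply, inl_inj] at h
  have := congrFun h 0
  simpa [MonoidHom.mulSingle_apply] using this

/-- The step function. -/
def step (g : Γ) : ℤ → Γ := fun n => if 1 ≤ n then g else 1

/-- `ψ g` is a commutator in `W Γ`. -/
lemma ψ_eq_commutator (g : Γ) : ψ Γ g = ⁅t Γ, (inl (step g) : W Γ)⁆ := by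
  rw [commutatorElement_def]
  unfold t
  have h1 : (inr (ofAdd 1) : W Γ) * inl (step g) * (inr (ofAdd 1))⁻¹ =
      inl (fun n => step g (n + 1)) := conj_inl 1 (step g)
  calc ψ Γ g = inl (fun n => step g (n + 1)) * (inl (step g))⁻¹ := by
        rw [← map_inv, ← map_mul]
        unfold ψ
        simp only [MonoidHom.comp_apply]
        congr 1
        funext n
        rcases lt_trichotomy n 0 with hn | hn | hn
        · have a1 : ¬ (1:ℤ) ≤ n + 1 := by omega
          have a2 : ¬ (1:ℤ) ≤ n := by omega
          have a3 : n ≠ 0 := by omega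
          have a4 : ¬ (0:ℤ) ≤ n := by omega
          simp [step, MonoidHom.mulSingle_apply, Pi.mulSingle_apply, a1, a2, a3, a4]
        · subst hn
          simp [step, MonoidHom.mulSingle_apply, Pi.mulSingle_apply]
        · have a1 : (1:ℤ) ≤ n + 1 := by omega
          have a2 : (1:ℤ) ≤ n := by omega
          have a3 : n ≠ 0 := by omega
          have a4 : (0:ℤ) ≤ n := by omega
          simp [step, MonoidHom.mulSingle_apply, Pi.mulSingle_apply, a1, a2, a3, a4]
    _ = inr (ofAdd 1) * inl (step g) * (inr (ofAdd 1))⁻¹ * (inl (step g))⁻¹ := by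
        rw [h1]

variable (Γ) in
/-- The coding function for an enumeration `e`. -/
noncomputable def fcode (e : ℕ → Γ) : ℤ → Γ := open Classical in fun m =>
  if (∃ q : ℕ, m = 2 ^ q) then e (Nat.log 2 m.toNat) else 1

lemma fcode_pow (e : ℕ → Γ) (q : ℕ) : fcode Γ e ((2:ℤ) ^ q) = e q := by
  unfold fcode
  rw [if_pos ⟨q, rfl⟩]
  congr 1
  have : ((2:ℤ) ^ q).toNat = 2 ^ q := by
    rw [show (2:ℤ) ^ q = ((2 ^ q : ℕ) : ℤ) by push_cast; ring]
    exact Int.toNat_natCast _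
  rw [this, Nat.log_pow (by norm_num)]

lemma fcode_not_pow (e : ℕ → Γ) (m : ℤ) (h : ¬ ∃ q : ℕ, m = 2 ^ q) :
    fcode Γ e m = 1 := by
  unfold fcode
  rw [if_neg h]

/-- The key computation: a commutator of conjugates of `inl (fcode e)` isolates a single
coordinate. -/
lemma key_commutator (e : ℕ → Γ) (i j : ℕ) (hij : i ≠ j) :
    ⁅(inr (ofAdd ((2:ℤ)^j - 2^i)) : W Γ) * inl (fcode Γ e) * (inr (ofAdd ((2:ℤ)^j - 2^i)))⁻¹,
      (inl (fcode Γ e) : W Γ)⁆ =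
    inl (Pi.mulSingle ((2:ℤ)^i) ⁅e j, e i⁆) := by
  set k : ℤ := (2:ℤ)^j - 2^i with hk
  set f : ℤ → Γ := fcode Γ e with hf
  rw [conj_inl k f, commutatorElement_def, ← map_inv, ← map_inv, ← map_mul, ← map_mul, ← map_mul]
  congr 1
  funext n
  simp only [Pi.mul_apply, Pi.inv_apply, Pi.mulSingle_apply]
  by_cases hn : n = (2:ℤ)^i
  · subst hn
    rw [if_pos rfl]
    have h1 : (2:ℤ)^i + k = 2^j := by rw [hk]; ring
    rw [h1, hf, fcode_pow, fcode_pow, commutatorElement_def]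
  · rw [if_neg hn]
    by_cases hp : ∃ p : ℕ, n = (2:ℤ)^p
    · obtain ⟨p, rfl⟩ := hp
      -- n = 2^p, p ≠ i. Show f (2^p + k) = 1.
      have hfk : f ((2:ℤ)^p + k) = 1 := by
        rw [hf]
        apply fcode_not_pow
        rintro ⟨q, hq⟩
        have : (2:ℤ)^q - 2^p = 2^j - 2^i := by rw [← hq, hk]; ring
        obtain ⟨_, hpi⟩ := sidon hij this
        exact hn (by rw [hpi])
      rw [hfk]
      group
    · have hfn : f ((2:ℤ)^0 * n) = 1 := by
        rw [hf]; apply fcode_not_pow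
        rintro ⟨q, hq⟩
        exact hp ⟨q, by linarith [hq]⟩
      have hfn' : f n = 1 := by
        have : (2:ℤ)^0 * n = n := by ring
        rwa [this] at hfn
      rw [hfn']
      group

/-- The main construction for groups in `Type 0`. -/
lemma main (Γ : Type) [Group Γ] [Countable Γ] :
    ∃ (H : Type) (_ : Group H) (f g : H),
      (Subgroup.closure {f, g} : Subgroup H) = ⊤ ∧
        ∃ φ : Γ → H, Function.Injective φ ∧ ∀ a b : Γ, φ (a * b) = φ a * φ b := by
  classical
  obtain ⟨s, hs⟩ := exists_surjective_nat Γ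
  obtain ⟨e, he0, heS⟩ : ∃ e : ℕ → W Γ, e 0 = t Γ ∧ ∀ m, e (m + 1) = inl (step (s m)) :=
    ⟨fun n => Nat.casesOn n (t Γ) fun m => inl (step (s m)), rfl, fun m => rfl⟩
  -- the two generators
  set a : W (W Γ) := inr (ofAdd 1) with ha
  set F : W (W Γ) := inl (fcode (W Γ) e) with hF
  have haK : a ∈ Subgroup.closure {a, F} := Subgroup.subset_closure (by simp)
  have hFK : F ∈ Subgroup.closure {a, F} := Subgroup.subset_closure (by simp)
  have hzpow : ∀ k : ℤ, (inr (ofAdd k) : W (W Γ)) = a ^ k := by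
    intro k
    rw [ha, ← map_zpow]
    congr 1
    rw [← ofAdd_zsmul, smul_eq_mul, mul_one]
  have hmem : ∀ g : Γ, ψ (W Γ) (ψ Γ g) ∈ Subgroup.closure {a, F} := by
    intro g
    obtain ⟨n, hn⟩ := hs g
    have h2 := key_commutator (Γ := W Γ) e (n + 1) 0 (Nat.succ_ne_zero n)
    rw [he0, heS n, hn, ← ψ_eq_commutator g] at h2
    have h3 : (inl (Pi.mulSingle ((2:ℤ) ^ (n + 1)) (ψ Γ g)) : W (W Γ)) ∈
        Subgroup.closure {a, F} := by
      rw [← h2, commutatorElement_def]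
      have hc : (inr (ofAdd ((2:ℤ) ^ 0 - 2 ^ (n + 1))) : W (W Γ)) * F *
          (inr (ofAdd ((2:ℤ) ^ 0 - 2 ^ (n + 1))))⁻¹ ∈ Subgroup.closure {a, F} :=
        mul_mem (mul_mem (by rw [hzpow]; exact zpow_mem haK _) hFK)
          (inv_mem (by rw [hzpow]; exact zpow_mem haK _))
      exact mul_mem (mul_mem (mul_mem hc hFK) (inv_mem hc)) (inv_mem hFK)
    have h4 : (inr (ofAdd ((2:ℤ) ^ (n + 1))) : W (W Γ)) *
        inl (Pi.mulSingle ((2:ℤ) ^ (n + 1)) (ψ Γ g)) *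
        (inr (ofAdd ((2:ℤ) ^ (n + 1))))⁻¹ = ψ (W Γ) (ψ Γ g) := by
      rw [conj_inl]
      show _ = inl ((MonoidHom.mulSingle (fun _ : ℤ => W Γ) 0) (ψ Γ g))
      congr 1
      funext q
      simp only [MonoidHom.mulSingle_apply, Pi.mulSingle_apply]
      by_cases hq : q = 0
      · subst hq; simp
      · rw [if_neg (by omega), if_neg hq]
    rw [← h4, hzpow]
    exact mul_mem (mul_mem (zpow_mem haK _) h3) (inv_mem (zpow_mem haK _))
  refine ⟨↥(Subgroup.closure {a, F}), inferInstance, ⟨a, haK⟩, ⟨F, hFK⟩, ?_,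
    fun g => ⟨ψ (W Γ) (ψ Γ g), hmem g⟩, ?_, ?_⟩
  · have hset : ({⟨a, haK⟩, ⟨F, hFK⟩} :
        Set ↥(Subgroup.closure ({a, F} : Set (W (W Γ))))) =
        ((↑) : ↥(Subgroup.closure ({a, F} : Set (W (W Γ)))) → W (W Γ)) ⁻¹' {a, F} := by
      ext x
      simp [Set.mem_preimage, Set.mem_insert_iff, Set.mem_singleton_iff, Subtype.ext_iff]
    rw [hset]
    exact Subgroup.closure_closure_coe_preimage
  · intro x y h
    have h' : ψ (W Γ) (ψ Γ x) = ψ (W Γ) (ψ Γ y) := congrArg Subtype.val h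
    exact ψ_injective (ψ_injective h')
  · intro x y
    exact Subtype.ext (by simp only [map_mul]; rfl)

end TwoGenAux

open TwoGenAux

/-- Every countable group embeds in a 2-generated group. -/
theorem countable_group_embeds_in_two_generated_group
    (G : Type*) [Group G] [Countable G] :
    ∃ (H : Type) (_ : Group H) (f g : H),
      (Subgroup.closure {f, g} : Subgroup H) = ⊤ ∧
        ∃ φ : G → H, Function.Injective φ ∧ ∀ a b : G, φ (a * b) = φ a * φ b := by
  haveI : Small.{0} G := Countable.toSmall G
  haveI : Countable (Shrink.{0} G) := (equivShrink G).symm.injective.countable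
  obtain ⟨H, hG, f, g, htop, φ, hinj, hmul⟩ := TwoGenAux.main (Shrink.{0} G)
  refine ⟨H, hG, f, g, htop, fun x => φ ((Shrink.mulEquiv (α := G)).symm x), ?_, ?_⟩
  · exact fun x y h => (Shrink.mulEquiv (α := G)).symm.injective (hinj h)
  · intro x y
    show φ (Shrink.mulEquiv.symm (x * y)) = _
    rw [map_mul, hmul]
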